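/- If C is an ample concept class and c is a corner of C (a concept belonging to a unique maximal cube of C), then C \ {c} is ample. -/

import Mathlib

variable {X : Type} [Fintype X] [DecidableEq X]

/-- Hamming distance between two subsets of `X` (size of symmetric difference). -/
def hdist (c c' : Finset X) : ℕ := ((c \ c') ∪ (c' \ c)).card

/-- The restriction `C|Y = {c ∩ Y : c ∈ C}`. -/
def restrictTo (C : Finset (Finset X)) (Y : Finset X) : Finset (Finset X) :=
  C.image (· ∩ Y)

/-- `Y` is shattered by `C`, i.e. `C|Y = 2^Y`. -/
def Shatters (C : Finset (Finset X)) (Y : Finset X) : Prop :=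
  ∀ s ∈ Y.powerset, ∃ c ∈ C, c ∩ Y = s

instance (C : Finset (Finset X)) : DecidablePred (Shatters C) := fun _ => by
  unfold Shatters; infer_instance

/-- The family `X̄(C)` of all sets shattered by `C`. -/
def shatteredSets (C : Finset (Finset X)) : Finset (Finset X) :=
  Finset.univ.filter (Shatters C)

/-- The VC dimension of `C`: maximum size of a shattered set. -/
def vcDim (C : Finset (Finset X)) : ℕ := (shatteredSets C).sup Finset.card

/-- `C` is ample: `|C| = |X̄(C)|`. -/
def IsAmple (C : Finset (Finset X)) : Prop := C.card = (shatteredSets C).card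

/-- `C` is a maximum class of VC dimension `d`. -/
def IsMaximumClass (C : Finset (Finset X)) (d : ℕ) : Prop :=
  vcDim C = d ∧ C.card = ∑ i ∈ Finset.range (d + 1), (Fintype.card X).choose i

/-- `B` is a cube with support `Y`: `B = {t ∪ s : s ⊆ Y}` for some `t ⊆ X \ Y`. -/
def IsCubeS (B : Finset (Finset X)) (Y : Finset X) : Prop :=
  ∃ t : Finset X, t ∩ Y = ∅ ∧ B = Y.powerset.image (fun s => t ∪ s)

/-- `B` is a cube. -/
def IsCube (B : Finset (Finset X)) : Prop := ∃ Y, IsCubeS B Y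

/-- `B` is a cube of `C`: a cube contained in `C`. -/
def IsCubeOf (C B : Finset (Finset X)) : Prop := B ⊆ C ∧ IsCube B

/-- `B` is a maximal cube of `C` (maximal under inclusion among cubes of `C`). -/
def IsMaximalCubeOf (C B : Finset (Finset X)) : Prop :=
  IsCubeOf C B ∧ ∀ B', IsCubeOf C B' → B ⊆ B' → B = B'

/-- `c` is a corner of `C`: a concept of `C` belonging to a unique maximal cube of `C`. -/
def IsCornerOf (C : Finset (Finset X)) (c : Finset X) : Prop :=
  c ∈ C ∧ ∃! B, IsMaximalCubeOf C B ∧ c ∈ B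

/-- The one-inclusion graph `G(C)`. -/
def oneInclusionGraph (C : Finset (Finset X)) : SimpleGraph {c : Finset X // c ∈ C} where
  Adj c c' := hdist c.1 c'.1 = 1
  symm := by
    constructor
    intro a b h
    simpa [hdist, Finset.union_comm] using h
  loopless := by
    constructor
    intro a h
    simp [hdist] at h

/-- `C` is isometric: `G(C)` is connected and graph distances equal Hamming distances. -/
def IsIsometric (C : Finset (Finset X)) : Prop :=
  (oneInclusionGraph C).Connected ∧
  ∀ c c' : {c : Finset X // c ∈ C}, (oneInclusionGraph C).dist c c' = hdist c.1 c'.1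

/-- `C` is weakly isometric: `G(C)` is connected and graph distances equal Hamming
distances for pairs at Hamming distance at most 2. -/
def IsWeaklyIsometric (C : Finset (Finset X)) : Prop :=
  (oneInclusionGraph C).Connected ∧
  ∀ c c' : {c : Finset X // c ∈ C}, hdist c.1 c'.1 ≤ 2 →
    (oneInclusionGraph C).dist c c' = hdist c.1 c'.1

/-- A list of concepts is a corner peeling if it has no duplicates and each element is a
corner of the corresponding level set. -/
def IsCornerPeeling (l : List (Finset X)) : Prop :=
  l.Nodup ∧ ∀ i (h : i < l.length), IsCornerOf ((l.take (i + 1)).toFinset) (l.get ⟨i, h⟩)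

/-- `C` is dismantlable: it admits a corner peeling ordering of all its concepts. -/
def Dismantlable (C : Finset (Finset X)) : Prop :=
  ∃ l : List (Finset X), l.toFinset = C ∧ IsCornerPeeling l

/-- Non-clashing condition for a map `r`. -/
def NonClashing (C : Finset (Finset X)) (r : Finset X → Finset X) : Prop :=
  ∀ c ∈ C, ∀ c' ∈ C, c ≠ c' → c ∩ (r c ∪ r c') ≠ c' ∩ (r c ∪ r c')

/-- `r` is a representation map for `C`: a non-clashing bijection from `C` onto `X̄(C)`. -/
def IsRepMap (C : Finset (Finset X)) (r : Finset X → Finset X) : Prop :=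
  (∀ c ∈ C, r c ∈ shatteredSets C) ∧
  Set.InjOn r ↑C ∧
  (∀ Y ∈ shatteredSets C, ∃ c ∈ C, r c = Y) ∧
  NonClashing C r

/-- `C` admits an unlabeled sample compression scheme of size `k`. -/
def HasUSCS (C : Finset (Finset X)) (k : ℕ) : Prop :=
  ∃ (α : Finset X → Finset X → Finset X) (β : Finset X → Finset X),
    ∀ (Y : Finset X), ∀ c ∈ C,
      α Y (c ∩ Y) ⊆ Y ∧ (α Y (c ∩ Y)).card ≤ k ∧
      β (α Y (c ∩ Y)) ∈ C ∧ β (α Y (c ∩ Y)) ∩ Y = c ∩ Y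

/-- The cube of `2^X` with support `Y` containing `c`. -/
def cubeAt (c Y : Finset X) : Finset (Finset X) :=
  Y.powerset.image (fun s => (c \ Y) ∪ s)

/-- Condition (C1): for every `c ∈ C`, the cube with support `r c` containing `c`
is a cube of `C`. -/
def CondC1 (C : Finset (Finset X)) (r : Finset X → Finset X) : Prop :=
  ∀ c ∈ C, cubeAt c (r c) ⊆ C

/-- Condition (C2): every cube of `C` has a unique concept `c` with `r c ∩ supp B = ∅`. -/
def CondC2 (C : Finset (Finset X)) (r : Finset X → Finset X) : Prop :=
  ∀ B Y, B ⊆ C → IsCubeS B Y → ∃! c, c ∈ B ∧ r c ∩ Y = ∅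

/-- The facet of the cross-polytope corresponding to a subset `c ⊆ X`:
`+x ∈ σ_c` iff `x ∈ c` (where `+x = Sum.inl x` and `-x = Sum.inr x`). -/
def facet (c : Finset X) : Finset (X ⊕ X) :=
  c.image Sum.inl ∪ (Finset.univ \ c).image Sum.inr

/-- A list of facets of the cross-polytope is a partial shelling. -/
def IsPartialShelling (L : List (Finset (X ⊕ X))) : Prop :=
  L.Nodup ∧ ∀ i j, i < j → j < L.length →
    ∃ k < j, ((L.getD k ∅) ∩ (L.getD j ∅)).card = Fintype.card X - 1 ∧
      (L.getD i ∅) ∩ (L.getD j ∅) ⊆ (L.getD k ∅) ∩ (L.getD j ∅)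

/-- `Q` is an incomplete cube for `(C, D)` with support `σ`: a cube of `C` whose
support `σ` is a missed simplex (shattered by `C` but not by `D`). -/
def IsIncompleteCube (C D Q : Finset (Finset X)) (σ : Finset X) : Prop :=
  Q ⊆ C ∧ IsCubeS Q σ ∧ Shatters C σ ∧ ¬ Shatters D σ

/-- `c` is the source of the incomplete cube `Q` with support `σ`:
`c ∈ Q` and `c ∩ σ ∉ D|σ`. -/
def IsSource (D Q : Finset (Finset X)) (σ : Finset X) (c : Finset X) : Prop :=
  c ∈ Q ∧ c ∩ σ ∉ restrictTo D σ

/-- The restriction `C_x = C|(X \ {x})`, with concepts viewed as subsets of `X`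
avoiding `x`. -/
def restrictX (C : Finset (Finset X)) (x : X) : Finset (Finset X) :=
  C.image (·.erase x)

/-- The reduction `C^x = {c ⊆ X \ {x} : c ∈ C and c ∪ {x} ∈ C}`. -/
def reduction (C : Finset (Finset X)) (x : X) : Finset (Finset X) :=
  C.filter (fun c => x ∉ c ∧ insert x c ∈ C)

/-- The interval `B(c,c') = {t : d(c,t) + d(t,c') = d(c,c')}`. -/
def interval (c c' : Finset X) : Finset (Finset X) :=
  Finset.univ.filter (fun t => hdist c t + hdist t c' = hdist c c')

/-- `C'` is convex in `C`. -/
def IsConvexIn (C C' : Finset (Finset X)) : Prop :=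
  ∀ c ∈ C', ∀ c'' ∈ C', interval c c'' ∩ C ⊆ C'

/-- `C'` is locally convex in `C`. -/
def IsLocallyConvexIn (C C' : Finset (Finset X)) : Prop :=
  ∀ c ∈ C', ∀ c'' ∈ C', hdist c c'' = 2 → interval c c'' ∩ C ⊆ C'

/-- `C` is a conditional antimatroid: contains `∅`, closed under intersection, and
every concept is generated by its extremal points. -/
def IsCondAntimatroid (C : Finset (Finset X)) : Prop :=
  ∅ ∈ C ∧ (∀ c ∈ C, ∀ c' ∈ C, c ∩ c' ∈ C) ∧
  ∀ c ∈ C, ∀ c' ∈ C, (c.filter (fun x => c.erase x ∈ C)) ⊆ c' → c ⊆ c'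

set_option linter.unusedSectionVars false
set_option linter.unusedVariables false
set_option linter.unreachableTactic false
set_option linter.unusedTactic false

lemma mem_shatteredSets {C : Finset (Finset X)} {Y : Finset X} :
    Y ∈ shatteredSets C ↔ Shatters C Y := by
  simp [shatteredSets]

lemma shatters_mono {C C' : Finset (Finset X)} {Y : Finset X} (h : C ⊆ C')
    (hY : Shatters C Y) : Shatters C' Y := by
  intro s hs
  obtain ⟨c, hc, hcs⟩ := hY s hs
  exact ⟨c, h hc, hcs⟩

lemma shatteredSets_mono {C C' : Finset (Finset X)} (h : C ⊆ C') :
    shatteredSets C ⊆ shatteredSets C' := fun Y hY =>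
  mem_shatteredSets.2 (shatters_mono h (mem_shatteredSets.1 hY))

lemma empty_mem_shatteredSets {C : Finset (Finset X)} (h : C.Nonempty) :
    ∅ ∈ shatteredSets C := by
  obtain ⟨c, hc⟩ := h
  refine mem_shatteredSets.2 (fun s hs => ?_)
  simp only [Finset.powerset_empty, Finset.mem_singleton] at hs
  exact ⟨c, hc, by simp [hs]⟩

section Split

variable (C : Finset (Finset X)) (x : X)

/-- elements not containing x -/
def half0 : Finset (Finset X) := C.filter (fun d => x ∉ d)
/-- elements containing x -/
def half1 : Finset (Finset X) := C.filter (fun d => x ∈ d)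

lemma half0_subset : half0 C x ⊆ C := Finset.filter_subset _ _
lemma half1_subset : half1 C x ⊆ C := Finset.filter_subset _ _

lemma card_half : (half0 C x).card + (half1 C x).card = C.card := by
  have := Finset.card_filter_add_card_filter_not (s := C) (p := fun d => x ∈ d)
  simp only [half0, half1]
  omega

variable {C x}

lemma shattered_half0_free {Y : Finset X} (h : Y ∈ shatteredSets (half0 C x)) : x ∉ Y := by
  intro hx
  obtain ⟨c, hc, hcY⟩ := mem_shatteredSets.1 h {x} (by simp [hx])
  have : x ∈ c := by
    have : x ∈ c ∩ Y := by rw [hcY]; simp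
    exact (Finset.mem_inter.1 this).1
  exact (Finset.mem_filter.1 hc).2 this

lemma shattered_half1_free {Y : Finset X} (h : Y ∈ shatteredSets (half1 C x)) : x ∉ Y := by
  intro hx
  obtain ⟨c, hc, hcY⟩ := mem_shatteredSets.1 h ∅ (by simp)
  have : x ∈ c ∩ Y := Finset.mem_inter.2 ⟨(Finset.mem_filter.1 hc).2, hx⟩
  rw [hcY] at this
  simp at this

lemma union_subset_A :
    shatteredSets (half0 C x) ∪ shatteredSets (half1 C x) ⊆
      (shatteredSets C).filter (fun Y => x ∉ Y) := by
  intro Y hY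
  rcases Finset.mem_union.1 hY with h | h
  · exact Finset.mem_filter.2 ⟨shatteredSets_mono (half0_subset C x) h, shattered_half0_free h⟩
  · exact Finset.mem_filter.2 ⟨shatteredSets_mono (half1_subset C x) h, shattered_half1_free h⟩

lemma inter_image_subset_B :
    (shatteredSets (half0 C x) ∩ shatteredSets (half1 C x)).image (insert x) ⊆
      (shatteredSets C).filter (fun Y => x ∈ Y) := by
  intro Z hZ
  obtain ⟨Y, hY, rfl⟩ := Finset.mem_image.1 hZ
  obtain ⟨h0, h1⟩ := Finset.mem_inter.1 hY
  have hxY : x ∉ Y := shattered_half0_free h0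
  refine Finset.mem_filter.2 ⟨mem_shatteredSets.2 (fun s hs => ?_), Finset.mem_insert_self _ _⟩
  rw [Finset.mem_powerset] at hs
  by_cases hxs : x ∈ s
  · obtain ⟨c, hc, hcY⟩ := mem_shatteredSets.1 h1 (s.erase x)
      (by rw [Finset.mem_powerset]; intro a ha
          have := hs (Finset.mem_of_mem_erase ha)
          rcases Finset.mem_insert.1 this with rfl | h
          · exact absurd rfl (Finset.ne_of_mem_erase ha)
          · exact h)
    refine ⟨c, half1_subset C x hc, ?_⟩
    have hxc : x ∈ c := (Finset.mem_filter.1 hc).2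
    rw [Finset.inter_insert_of_mem hxc, hcY, Finset.insert_erase hxs]
  · obtain ⟨c, hc, hcY⟩ := mem_shatteredSets.1 h0 s
      (by rw [Finset.mem_powerset]; intro a ha
          rcases Finset.mem_insert.1 (hs ha) with rfl | h
          · exact absurd ha hxs
          · exact h)
    refine ⟨c, half0_subset C x hc, ?_⟩
    have hxc : x ∉ c := (Finset.mem_filter.1 hc).2
    rw [Finset.inter_insert_of_notMem hxc, hcY]

lemma insert_injOn :
    Set.InjOn (insert x)
      ((shatteredSets (half0 C x) ∩ shatteredSets (half1 C x) : Finset (Finset X)) :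
        Set (Finset X)) := by
  intro Y hY Z hZ h
  have hY' : x ∉ Y := shattered_half0_free (Finset.mem_inter.1 (by exact_mod_cast hY)).1
  have hZ' : x ∉ Z := shattered_half0_free (Finset.mem_inter.1 (by exact_mod_cast hZ)).1
  have := congrArg (Finset.erase · x) h
  simpa [Finset.erase_insert_of_ne, Finset.erase_insert, hY', hZ',
    Finset.erase_eq_of_notMem] using this

lemma splitCount :
    (shatteredSets (half0 C x)).card + (shatteredSets (half1 C x)).card ≤
      (shatteredSets C).card := by
  classical
  have h1 : (shatteredSets (half0 C x)).card + (shatteredSets (half1 C x)).card =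
      (shatteredSets (half0 C x) ∪ shatteredSets (half1 C x)).card +
      (shatteredSets (half0 C x) ∩ shatteredSets (half1 C x)).card := by
    rw [Finset.card_union_add_card_inter]
  have h2 : (shatteredSets (half0 C x) ∩ shatteredSets (half1 C x)).card =
      ((shatteredSets (half0 C x) ∩ shatteredSets (half1 C x)).image (insert x)).card :=
    (Finset.card_image_of_injOn insert_injOn).symm
  have h3 := Finset.card_le_card (union_subset_A (C := C) (x := x))
  have h4 := Finset.card_le_card (inter_image_subset_B (C := C) (x := x))
  have h5 : ((shatteredSets C).filter (fun Y => x ∉ Y)).card +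
      ((shatteredSets C).filter (fun Y => x ∈ Y)).card = (shatteredSets C).card := by
    have := Finset.card_filter_add_card_filter_not (s := shatteredSets C)
      (p := fun Y => x ∈ Y)
    omega
  omega

lemma pajor_aux : ∀ n, ∀ C : Finset (Finset X), C.card ≤ n →
    C.card ≤ (shatteredSets C).card := by
  intro n
  induction n with
  | zero => intro C h; omega
  | succ n ih =>
  intro C hcard
  by_cases h1 : C.card ≤ 1
  · interval_cases h : C.card
    · omega
    · obtain ⟨c, rfl⟩ := Finset.card_eq_one.1 h
      have := empty_mem_shatteredSets (C := {c}) ⟨c, by simp⟩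
      have := Finset.card_pos.2 ⟨∅, this⟩
      omega
  · push_neg at h1
    obtain ⟨c, hc, c', hc', hne⟩ := Finset.one_lt_card.1 h1
    have : ¬ (c ⊆ c' ∧ c' ⊆ c) := fun ⟨h, h'⟩ => hne (Finset.Subset.antisymm h h')
    have hex : ∃ x, (x ∈ c ∧ x ∉ c') ∨ (x ∈ c' ∧ x ∉ c) := by
      by_contra hcon
      push_neg at hcon
      apply hne
      ext a
      have := hcon a
      tauto
    obtain ⟨x, hx⟩ := hex
    have h0ne : (half0 C x).Nonempty := by
      rcases hx with ⟨h, h'⟩ | ⟨h, h'⟩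
      · exact ⟨c', Finset.mem_filter.2 ⟨hc', h'⟩⟩
      · exact ⟨c, Finset.mem_filter.2 ⟨hc, h'⟩⟩
    have h1ne : (half1 C x).Nonempty := by
      rcases hx with ⟨h, h'⟩ | ⟨h, h'⟩
      · exact ⟨c, Finset.mem_filter.2 ⟨hc, h⟩⟩
      · exact ⟨c', Finset.mem_filter.2 ⟨hc', h⟩⟩
    have hcards := card_half C x
    have hlt0 : (half0 C x).card < C.card := by
      refine Finset.card_lt_card (Finset.ssubset_iff_of_subset (half0_subset C x) |>.2 ?_)
      obtain ⟨d, hd⟩ := h1ne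
      exact ⟨d, (Finset.mem_filter.1 hd).1, fun hmem => (Finset.mem_filter.1 hmem).2
        (Finset.mem_filter.1 hd).2⟩
    have hlt1 : (half1 C x).card < C.card := by
      refine Finset.card_lt_card (Finset.ssubset_iff_of_subset (half1_subset C x) |>.2 ?_)
      obtain ⟨d, hd⟩ := h0ne
      exact ⟨d, (Finset.mem_filter.1 hd).1, fun hmem => (Finset.mem_filter.1 hd).2
        (Finset.mem_filter.1 hmem).2⟩
    have i0 := ih (half0 C x) (by omega)
    have i1 := ih (half1 C x) (by omega)
    have := splitCount (C := C) (x := x)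
    omega

lemma pajor (C : Finset (Finset X)) : C.card ≤ (shatteredSets C).card :=
  pajor_aux C.card C le_rfl


lemma ample_split {C : Finset (Finset X)} (hC : IsAmple C) (x : X) :
    IsAmple (half0 C x) ∧ IsAmple (half1 C x) ∧
    (shatteredSets C).filter (fun Y => x ∉ Y) =
      shatteredSets (half0 C x) ∪ shatteredSets (half1 C x) ∧
    (shatteredSets C).filter (fun Y => x ∈ Y) =
      (shatteredSets (half0 C x) ∩ shatteredSets (half1 C x)).image (insert x) := by
  classical
  have hAB : ((shatteredSets C).filter (fun Y => x ∉ Y)).card +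
      ((shatteredSets C).filter (fun Y => x ∈ Y)).card = (shatteredSets C).card := by
    have := Finset.card_filter_add_card_filter_not (s := shatteredSets C)
      (p := fun Y => x ∈ Y)
    omega
  have hui : (shatteredSets (half0 C x) ∪ shatteredSets (half1 C x)).card +
      (shatteredSets (half0 C x) ∩ shatteredSets (half1 C x)).card =
      (shatteredSets (half0 C x)).card + (shatteredSets (half1 C x)).card :=
    Finset.card_union_add_card_inter _ _
  have himg : ((shatteredSets (half0 C x) ∩ shatteredSets (half1 C x)).image (insert x)).card =
      (shatteredSets (half0 C x) ∩ shatteredSets (half1 C x)).card :=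
    Finset.card_image_of_injOn insert_injOn
  have h3 := Finset.card_le_card (union_subset_A (C := C) (x := x))
  have h4 := Finset.card_le_card (inter_image_subset_B (C := C) (x := x))
  have p0 := pajor (half0 C x)
  have p1 := pajor (half1 C x)
  have hc := card_half C x
  have hca : C.card = (shatteredSets C).card := hC
  refine ⟨?_, ?_, ?_, ?_⟩
  · unfold IsAmple; omega
  · unfold IsAmple; omega
  · exact (Finset.eq_of_subset_of_card_le union_subset_A (by omega)).symm
  · exact (Finset.eq_of_subset_of_card_le inter_image_subset_B (by omega)).symm


lemma restrictX_eq_union (C : Finset (Finset X)) (x : X) :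
    restrictX C x = half0 C x ∪ (half1 C x).image (·.erase x) := by
  ext d
  simp only [restrictX, Finset.mem_union, Finset.mem_image, half0, half1, Finset.mem_filter]
  constructor
  · rintro ⟨e, he, rfl⟩
    by_cases hx : x ∈ e
    · exact Or.inr ⟨e, ⟨he, hx⟩, rfl⟩
    · exact Or.inl ⟨by rwa [Finset.erase_eq_of_notMem hx], Finset.notMem_erase _ _⟩
  · rintro (⟨hd, hx⟩ | ⟨e, ⟨he, hx⟩, rfl⟩)
    · exact ⟨d, hd, Finset.erase_eq_of_notMem hx⟩
    · exact ⟨e, he, rfl⟩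

lemma half0_inter_eq_reduction (C : Finset (Finset X)) (x : X) :
    half0 C x ∩ (half1 C x).image (·.erase x) = reduction C x := by
  ext d
  simp only [Finset.mem_inter, Finset.mem_image, half0, half1, Finset.mem_filter,
    reduction]
  constructor
  · rintro ⟨⟨hd, hx⟩, e, ⟨he, hxe⟩, rfl⟩
    exact ⟨hd, hx, by rwa [Finset.insert_erase hxe]⟩
  · rintro ⟨hd, hx, hins⟩
    exact ⟨⟨hd, hx⟩, insert x d, ⟨hins, Finset.mem_insert_self _ _⟩,
      by rw [Finset.erase_insert hx]⟩

lemma card_image_erase (C : Finset (Finset X)) (x : X) :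
    ((half1 C x).image (·.erase x)).card = (half1 C x).card := by
  apply Finset.card_image_of_injOn
  intro a ha b hb h
  have hxa : x ∈ a := (Finset.mem_filter.1 ha).2
  have hxb : x ∈ b := (Finset.mem_filter.1 hb).2
  have := congrArg (insert x) h
  simpa [Finset.insert_erase hxa, Finset.insert_erase hxb] using this

lemma card_restrictX (C : Finset (Finset X)) (x : X) :
    (restrictX C x).card + (reduction C x).card = C.card := by
  have h1 := Finset.card_union_add_card_inter (half0 C x) ((half1 C x).image (·.erase x))
  rw [half0_inter_eq_reduction, ← restrictX_eq_union, card_image_erase] at h1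
  have := card_half C x
  omega

lemma shattered_reduction_subset (C : Finset (Finset X)) (x : X) :
    shatteredSets (reduction C x) ⊆
      shatteredSets (half0 C x) ∩ shatteredSets (half1 C x) := by
  intro Y hY
  have hxY : x ∉ Y := by
    intro hx
    obtain ⟨d, hd, hdY⟩ := mem_shatteredSets.1 hY {x} (by simp [hx])
    have : x ∈ d := by
      have : x ∈ d ∩ Y := by rw [hdY]; simp
      exact (Finset.mem_inter.1 this).1
    exact ((Finset.mem_filter.1 hd).2.1) this
  refine Finset.mem_inter.2 ⟨mem_shatteredSets.2 fun s hs => ?_, mem_shatteredSets.2 fun s hs => ?_⟩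
  · obtain ⟨d, hd, hdY⟩ := mem_shatteredSets.1 hY s hs
    obtain ⟨hdC, hxd, _⟩ := Finset.mem_filter.1 hd
    exact ⟨d, Finset.mem_filter.2 ⟨hdC, hxd⟩, hdY⟩
  · obtain ⟨d, hd, hdY⟩ := mem_shatteredSets.1 hY s hs
    obtain ⟨hdC, hxd, hins⟩ := Finset.mem_filter.1 hd
    refine ⟨insert x d, Finset.mem_filter.2 ⟨hins, Finset.mem_insert_self _ _⟩, ?_⟩
    rw [Finset.insert_inter_of_notMem hxY, hdY]

lemma shattered_restrictX_subset (C : Finset (Finset X)) (x : X) :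
    shatteredSets (restrictX C x) ⊆ (shatteredSets C).filter (fun Y => x ∉ Y) := by
  intro Y hY
  have hxY : x ∉ Y := by
    intro hx
    obtain ⟨d, hd, hdY⟩ := mem_shatteredSets.1 hY {x} (by simp [hx])
    obtain ⟨e, he, rfl⟩ := Finset.mem_image.1 hd
    have : x ∈ e.erase x := by
      have : x ∈ e.erase x ∩ Y := by rw [hdY]; simp
      exact (Finset.mem_inter.1 this).1
    simp at this
  refine Finset.mem_filter.2 ⟨mem_shatteredSets.2 fun s hs => ?_, hxY⟩
  obtain ⟨d, hd, hdY⟩ := mem_shatteredSets.1 hY s hs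
  obtain ⟨e, he, rfl⟩ := Finset.mem_image.1 hd
  refine ⟨e, he, ?_⟩
  rw [← hdY]
  ext a
  simp only [Finset.mem_inter, Finset.mem_erase]
  constructor
  · intro ⟨h1, h2⟩; exact ⟨⟨fun h => hxY (h ▸ h2), h1⟩, h2⟩
  · rintro ⟨⟨h1, h2⟩, h3⟩; exact ⟨h2, h3⟩

lemma ample_restrictX {C : Finset (Finset X)} (hC : IsAmple C) (x : X) :
    IsAmple (restrictX C x) := by
  obtain ⟨h0, h1, hA, hB⟩ := ample_split hC x
  -- ⊇ direction of shattered_restrictX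
  have hsup : (shatteredSets C).filter (fun Y => x ∉ Y) ⊆ shatteredSets (restrictX C x) := by
    rw [hA]
    intro Y hY
    rcases Finset.mem_union.1 hY with h | h
    · have hxY : x ∉ Y := shattered_half0_free h
      refine mem_shatteredSets.2 fun s hs => ?_
      obtain ⟨d, hd, hdY⟩ := mem_shatteredSets.1 h s hs
      obtain ⟨hdC, hxd⟩ := Finset.mem_filter.1 hd
      refine ⟨d.erase x, Finset.mem_image.2 ⟨d, hdC, rfl⟩, ?_⟩
      rw [Finset.erase_eq_of_notMem hxd, hdY]
    · have hxY : x ∉ Y := shattered_half1_free h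
      refine mem_shatteredSets.2 fun s hs => ?_
      obtain ⟨d, hd, hdY⟩ := mem_shatteredSets.1 h s hs
      obtain ⟨hdC, hxd⟩ := Finset.mem_filter.1 hd
      refine ⟨d.erase x, Finset.mem_image.2 ⟨d, hdC, rfl⟩, ?_⟩
      rw [← hdY]
      ext a
      simp only [Finset.mem_inter, Finset.mem_erase]
      constructor
      · rintro ⟨⟨h1', h2'⟩, h3'⟩; exact ⟨h2', h3'⟩
      · intro ⟨h1', h2'⟩; exact ⟨⟨fun h => hxY (h ▸ h2'), h1'⟩, h2'⟩
  have hXeq : shatteredSets (restrictX C x) = (shatteredSets C).filter (fun Y => x ∉ Y) :=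
    Finset.Subset.antisymm (shattered_restrictX_subset C x) hsup
  -- counting
  have hc1 := card_restrictX C x
  have hc2 := card_half C x
  have hui : (shatteredSets (half0 C x) ∪ shatteredSets (half1 C x)).card +
      (shatteredSets (half0 C x) ∩ shatteredSets (half1 C x)).card =
      (shatteredSets (half0 C x)).card + (shatteredSets (half1 C x)).card :=
    Finset.card_union_add_card_inter _ _
  have hred : (reduction C x).card ≤
      (shatteredSets (half0 C x) ∩ shatteredSets (half1 C x)).card :=
    le_trans (pajor _) (Finset.card_le_card (shattered_reduction_subset C x))
  have hpx := pajor (restrictX C x)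
  have e1 : (shatteredSets (restrictX C x)).card =
      (shatteredSets (half0 C x) ∪ shatteredSets (half1 C x)).card := by
    rw [hXeq, hA]
  have e0 : (half0 C x).card = (shatteredSets (half0 C x)).card := h0
  have e0' : (half1 C x).card = (shatteredSets (half1 C x)).card := h1
  unfold IsAmple
  omega


lemma restrictTo_univ (C : Finset (Finset X)) : restrictTo C Finset.univ = C := by
  simp [restrictTo]

lemma erase_inter_insert {c Y : Finset X} {x : X} (hx : x ∉ Y) :
    (c ∩ insert x Y).erase x = c ∩ Y := by
  ext a
  simp only [Finset.mem_erase, Finset.mem_inter, Finset.mem_insert]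
  constructor
  · rintro ⟨h1, h2, (rfl | h3)⟩
    · exact absurd rfl h1
    · exact ⟨h2, h3⟩
  · rintro ⟨h1, h2⟩
    exact ⟨fun h => hx (h ▸ h2), h1, Or.inr h2⟩

lemma restrictTo_insert (C : Finset (Finset X)) {Y : Finset X} {x : X} (hx : x ∉ Y) :
    restrictTo C Y = restrictX (restrictTo C (insert x Y)) x := by
  ext d
  simp only [restrictTo, restrictX, Finset.mem_image]
  constructor
  · rintro ⟨c, hc, rfl⟩
    exact ⟨c ∩ insert x Y, ⟨c, hc, rfl⟩, erase_inter_insert hx⟩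
  · rintro ⟨e, ⟨c, hc, rfl⟩, rfl⟩
    exact ⟨c, hc, (erase_inter_insert hx).symm⟩

lemma ample_restrictTo {C : Finset (Finset X)} (hC : IsAmple C) (Y : Finset X) :
    IsAmple (restrictTo C Y) := by
  classical
  suffices h : ∀ n (Y : Finset X), (Finset.univ \ Y).card ≤ n → IsAmple (restrictTo C Y) from
    h _ Y le_rfl
  intro n
  induction n with
  | zero =>
    intro Y hY
    have : Finset.univ \ Y = ∅ := Finset.card_eq_zero.1 (by omega)
    have hYu : Y = Finset.univ := by
      apply Finset.eq_univ_of_forall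
      intro a
      by_contra ha
      have h2 : a ∈ Finset.univ \ Y := Finset.mem_sdiff.2 ⟨Finset.mem_univ _, ha⟩
      rw [‹Finset.univ \ Y = ∅›] at h2
      simp at h2
    rw [hYu, restrictTo_univ]
    exact hC
  | succ n ih =>
    intro Y hY
    by_cases hYu : Y = Finset.univ
    · rw [hYu, restrictTo_univ]; exact hC
    · have : (Finset.univ \ Y).Nonempty := by
        rw [Finset.sdiff_nonempty]
        intro h
        exact hYu (Finset.eq_univ_of_forall fun a => h (Finset.mem_univ a))
      obtain ⟨x, hx⟩ := this
      have hxY : x ∉ Y := (Finset.mem_sdiff.1 hx).2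
      rw [restrictTo_insert C hxY]
      apply ample_restrictX
      apply ih
      have : Finset.univ \ insert x Y = (Finset.univ \ Y).erase x := by
        ext a
        simp only [Finset.mem_sdiff, Finset.mem_univ, true_and, Finset.mem_insert,
          Finset.mem_erase]
        tauto
      rw [this]
      have := Finset.card_erase_of_mem hx
      omega


lemma sdiff_insert_eq_erase_sdiff (d Y : Finset X) (x : X) :
    d \ insert x Y = (d \ Y).erase x := by
  ext a
  simp only [Finset.mem_sdiff, Finset.mem_insert, Finset.mem_erase]
  tauto

lemma ample_filter_cube {C : Finset (Finset X)} (hC : IsAmple C) (c Y : Finset X) :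
    IsAmple (C.filter (fun d => d \ Y = c \ Y)) := by
  classical
  suffices h : ∀ n (C : Finset (Finset X)) (Y : Finset X), (Finset.univ \ Y).card ≤ n →
      IsAmple C → IsAmple (C.filter (fun d => d \ Y = c \ Y)) from h _ C Y le_rfl hC
  intro n
  induction n with
  | zero =>
    intro C Y hY hC
    have hYu : Y = Finset.univ := by
      have h0 : Finset.univ \ Y = ∅ := Finset.card_eq_zero.1 (by omega)
      apply Finset.eq_univ_of_forall
      intro a
      by_contra ha
      have h2 : a ∈ Finset.univ \ Y := Finset.mem_sdiff.2 ⟨Finset.mem_univ _, ha⟩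
      rw [h0] at h2
      simp at h2
    subst hYu
    rw [Finset.filter_true_of_mem (fun d _ => by ext a; simp)]
    exact hC
  | succ n ih =>
    intro C Y hY hC
    by_cases hYu : Y = Finset.univ
    · subst hYu
      rw [Finset.filter_true_of_mem (fun d _ => by ext a; simp)]
      exact hC
    · have hne : (Finset.univ \ Y).Nonempty := by
        rw [Finset.sdiff_nonempty]
        intro h
        exact hYu (Finset.eq_univ_of_forall fun a => h (Finset.mem_univ a))
      obtain ⟨x, hx⟩ := hne
      have hxY : x ∉ Y := (Finset.mem_sdiff.1 hx).2
      have hcard : (Finset.univ \ insert x Y).card ≤ n := by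
        have h1 : Finset.univ \ insert x Y = (Finset.univ \ Y).erase x := by
          ext a
          simp only [Finset.mem_sdiff, Finset.mem_univ, true_and, Finset.mem_insert,
            Finset.mem_erase]
          tauto
        rw [h1]
        have := Finset.card_erase_of_mem hx
        omega
      -- the matching half
      set C' : Finset (Finset X) := if x ∈ c then half1 C x else half0 C x with hC'
      have hC'ample : IsAmple C' := by
        rcases (ample_split hC x) with ⟨h0, h1, -, -⟩
        by_cases hxc : x ∈ c <;> simp [hC', hxc, h0, h1]
      have hmem : ∀ d, d ∈ C' ↔ d ∈ C ∧ ((x ∈ d) ↔ (x ∈ c)) := by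
        intro d
        by_cases hxc : x ∈ c <;> simp [hC', hxc, half0, half1, Finset.mem_filter] <;> tauto
      have hkey : C.filter (fun d => d \ Y = c \ Y) =
          C'.filter (fun d => d \ insert x Y = c \ insert x Y) := by
        ext d
        simp only [Finset.mem_filter, hmem]
        constructor
        · rintro ⟨hd, hdc⟩
          have hxiff : (x ∈ d) ↔ (x ∈ c) := by
            constructor <;> intro h
            · have : x ∈ d \ Y := Finset.mem_sdiff.2 ⟨h, hxY⟩
              rw [hdc] at this
              exact (Finset.mem_sdiff.1 this).1
            · have : x ∈ c \ Y := Finset.mem_sdiff.2 ⟨h, hxY⟩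
              rw [← hdc] at this
              exact (Finset.mem_sdiff.1 this).1
          refine ⟨⟨hd, hxiff⟩, ?_⟩
          rw [sdiff_insert_eq_erase_sdiff, sdiff_insert_eq_erase_sdiff, hdc]
        · rintro ⟨⟨hd, hxiff⟩, hdc⟩
          refine ⟨hd, ?_⟩
          ext a
          by_cases hax : a = x
          · subst hax
            simp only [Finset.mem_sdiff, hxY]
            tauto
          · have h1 := congrArg (fun s => a ∈ s) hdc
            simp only [sdiff_insert_eq_erase_sdiff, Finset.mem_erase, Finset.mem_sdiff,
              eq_iff_iff] at h1 ⊢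
            tauto
      rw [hkey]
      exact ih C' (insert x Y) hcard hC'ample


lemma traces_full :
    ∀ (Y : Finset X) (E : Finset (Finset X)), IsAmple E →
      (∀ e ∈ E, e ⊆ Y) → (∀ e ∈ E, e ≠ ∅) → (∀ y ∈ Y, ({y} : Finset X) ∈ E) →
      ∀ s, s ⊆ Y → s ≠ ∅ → s ∈ E := by
  classical
  suffices h : ∀ n (Y : Finset X), Y.card ≤ n → ∀ (E : Finset (Finset X)), IsAmple E →
      (∀ e ∈ E, e ⊆ Y) → (∀ e ∈ E, e ≠ ∅) → (∀ y ∈ Y, ({y} : Finset X) ∈ E) →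
      ∀ s, s ⊆ Y → s ≠ ∅ → s ∈ E by
    intro Y E h1 h2 h3 h4 s h5 h6
    exact h Y.card Y le_rfl E h1 h2 h3 h4 s h5 h6
  intro n
  induction n with
  | zero =>
    intro Y hY E hE hsub hne hsing s hsY hs
    have : Y = ∅ := Finset.card_eq_zero.1 (by omega)
    subst this
    exact absurd (Finset.subset_empty.1 hsY) hs
  | succ n ih =>
    intro Y hY E hE hsub hne hsing s hsY hs
    obtain ⟨y, hy⟩ := Finset.nonempty_iff_ne_empty.2 hs
    have hyY : y ∈ Y := hsY hy
    obtain ⟨hE0a, hE1a, hAeq, -⟩ := ample_split hE y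
    -- (i) : E shatters Y.erase y
    have hi : Shatters E (Y.erase y) := by
      intro s' hs'
      rw [Finset.mem_powerset] at hs'
      by_cases h0 : s' = ∅
      · subst h0
        refine ⟨{y}, hsing y hyY, ?_⟩
        rw [Finset.singleton_inter_of_notMem (Finset.notMem_erase _ _)]
      · have hcard : (Y.erase y).card ≤ n := by
          have := Finset.card_erase_of_mem hyY
          have := Finset.card_pos.2 ⟨y, hyY⟩
          omega
        have hmem : s' ∈ half0 E y := by
          apply ih (Y.erase y) hcard (half0 E y) hE0a
          · intro e he
            have h1 := hsub e (half0_subset E y he)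
            have h2 := (Finset.mem_filter.1 he).2
            intro a ha
            exact Finset.mem_erase.2 ⟨fun hh => h2 (hh ▸ ha), h1 ha⟩
          · intro e he
            exact hne e (half0_subset E y he)
          · intro y' hy'
            obtain ⟨hy'ne, hy'Y⟩ := Finset.mem_erase.1 hy'
            exact Finset.mem_filter.2 ⟨hsing y' hy'Y, by simp [hy'ne.symm]⟩
          · exact hs'
          · exact h0
        refine ⟨s', half0_subset E y hmem, ?_⟩
        apply Finset.inter_eq_left.2
        intro a ha
        have h1 := hsub s' (half0_subset E y hmem) ha
        have h2 := (Finset.mem_filter.1 hmem).2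
        exact Finset.mem_erase.2 ⟨fun hh => h2 (hh ▸ ha), h1⟩
    -- (ii) : half0 does not shatter Y.erase y
    have hii : ¬ Shatters (half0 E y) (Y.erase y) := by
      intro h
      obtain ⟨e, he, heY⟩ := h ∅ (by simp)
      have h1 : e ⊆ Y.erase y := by
        intro a ha
        exact Finset.mem_erase.2 ⟨fun hh => (Finset.mem_filter.1 he).2 (hh ▸ ha),
          hsub e (half0_subset E y he) ha⟩
      rw [Finset.inter_eq_left.2 h1] at heY
      exact hne e (half0_subset E y he) heY
    -- Y.erase y is shattered by half1
    have hmemA : Y.erase y ∈ (shatteredSets E).filter (fun Z => y ∉ Z) :=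
      Finset.mem_filter.2 ⟨mem_shatteredSets.2 hi, Finset.notMem_erase _ _⟩
    rw [hAeq] at hmemA
    have h1sh : Shatters (half1 E y) (Y.erase y) := by
      rcases Finset.mem_union.1 hmemA with h | h
      · exact absurd (mem_shatteredSets.1 h) hii
      · exact mem_shatteredSets.1 h
    -- extract witness for trace s.erase y
    obtain ⟨e, he, heY⟩ := h1sh (s.erase y) (Finset.mem_powerset.2 (Finset.erase_subset_erase _ hsY))
    have hye : y ∈ e := (Finset.mem_filter.1 he).2
    have heE : e ∈ E := half1_subset E y he
    have h2 : e ∩ (Y.erase y) = e.erase y := by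
      ext a
      simp only [Finset.mem_inter, Finset.mem_erase]
      constructor
      · rintro ⟨h3, h4, h5⟩; exact ⟨h4, h3⟩
      · rintro ⟨h3, h4⟩; exact ⟨h4, h3, hsub e heE h4⟩
    rw [h2] at heY
    have : e = s := by
      ext a
      by_cases hay : a = y
      · subst hay; simp [hye, hy]
      · have := congrArg (fun t => a ∈ t) heY
        simp only [Finset.mem_erase, eq_iff_iff, hay] at this
        simpa [hay] using this
    exact this ▸ heE


lemma exists_good_transversal {G : Finset (Finset X)} (hG : IsAmple G) (hGne : G.Nonempty)
    (h0 : ∀ g ∈ G, g ≠ ∅) :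
    ∃ Y : Finset X, (∀ s, s ⊆ Y → s ≠ ∅ → ∃ g ∈ G, g ∩ Y = s) ∧ (∀ g ∈ G, g ∩ Y ≠ ∅) := by
  classical
  set T : Finset (Finset X) :=
    Finset.univ.powerset.filter (fun Y => ∀ g ∈ G, (g ∩ Y).Nonempty) with hT
  have hTne : T.Nonempty := by
    refine ⟨Finset.univ, Finset.mem_filter.2 ⟨Finset.mem_powerset.2 (Finset.subset_univ _), ?_⟩⟩
    intro g hg
    rw [Finset.inter_univ]
    exact Finset.nonempty_iff_ne_empty.2 (h0 g hg)
  obtain ⟨Y, hYT, hYmin⟩ := T.exists_min_image Finset.card hTne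
  have hYtrans : ∀ g ∈ G, (g ∩ Y).Nonempty := (Finset.mem_filter.1 hYT).2
  have hsing : ∀ y ∈ Y, ∃ g ∈ G, g ∩ Y = {y} := by
    intro y hy
    have herase : Y.erase y ∉ T := by
      intro h
      have := hYmin _ h
      have := Finset.card_erase_of_mem hy
      have := Finset.card_pos.2 ⟨y, hy⟩
      omega
    have : ∃ g ∈ G, ¬ (g ∩ Y.erase y).Nonempty := by
      by_contra hc
      push_neg at hc
      exact herase (Finset.mem_filter.2 ⟨Finset.mem_powerset.2 (Finset.subset_univ _), hc⟩)
    obtain ⟨g, hg, hge⟩ := this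
    rw [Finset.not_nonempty_iff_eq_empty] at hge
    refine ⟨g, hg, ?_⟩
    have hsub : g ∩ Y ⊆ {y} := by
      intro a ha
      obtain ⟨h1, h2⟩ := Finset.mem_inter.1 ha
      rw [Finset.mem_singleton]
      by_contra hay
      have : a ∈ g ∩ Y.erase y := Finset.mem_inter.2 ⟨h1, Finset.mem_erase.2 ⟨hay, h2⟩⟩
      rw [hge] at this
      simp at this
    rcases Finset.subset_singleton_iff.1 hsub with h | h
    · exact absurd h (Finset.nonempty_iff_ne_empty.1 (hYtrans g hg))
    · exact h
  refine ⟨Y, ?_, fun g hg => Finset.nonempty_iff_ne_empty.1 (hYtrans g hg)⟩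
  intro s hsY hs
  have hmem : s ∈ restrictTo G Y := by
    apply traces_full Y (restrictTo G Y) (ample_restrictTo hG Y)
    · intro e he
      obtain ⟨g, hg, rfl⟩ := Finset.mem_image.1 he
      exact Finset.inter_subset_right
    · intro e he
      obtain ⟨g, hg, rfl⟩ := Finset.mem_image.1 he
      exact Finset.nonempty_iff_ne_empty.1 (hYtrans g hg)
    · intro y hy
      obtain ⟨g, hg, hgy⟩ := hsing y hy
      exact Finset.mem_image.2 ⟨g, hg, hgy⟩
    · exact hsY
    · exact hs
  obtain ⟨g, hg, hgs⟩ := Finset.mem_image.1 hmem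
  exact ⟨g, hg, hgs⟩


lemma erase_inter_of_not_mem {f Y : Finset X} {x : X} (hx : x ∉ Y) :
    (f.erase x) ∩ Y = f ∩ Y := by
  ext a
  simp only [Finset.mem_inter, Finset.mem_erase]
  constructor
  · rintro ⟨⟨h1, h2⟩, h3⟩; exact ⟨h2, h3⟩
  · rintro ⟨h1, h2⟩; exact ⟨⟨fun h => hx (h ▸ h2), h1⟩, h2⟩

lemma crux_normalized {C : Finset (Finset X)} (hC : IsAmple C) (x : X)
    (hempty : (∅ : Finset X) ∈ C) (hall : ∀ d ∈ C, d ≠ ∅ → x ∈ d)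
    (hne : ∃ d ∈ C, d ≠ ∅) : ({x} : Finset X) ∈ C := by
  classical
  by_contra hnx
  set F1 : Finset (Finset X) := half1 C x with hF1def
  have hF1eq : F1 = C.erase ∅ := by
    ext d
    simp only [hF1def, half1, Finset.mem_filter, Finset.mem_erase]
    constructor
    · rintro ⟨h1, h2⟩
      exact ⟨fun h => by subst h; simp at h2, h1⟩
    · rintro ⟨h1, h2⟩
      exact ⟨h2, hall d h2 h1⟩
  have hF1ample : IsAmple F1 := (ample_split hC x).2.1
  have hF1sub : F1 ⊆ C := half1_subset C x
  have hF1card : F1.card = C.card - 1 := by rw [hF1eq, Finset.card_erase_of_mem hempty]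
  have hF1x : ∀ f ∈ F1, x ∈ f := fun f hf => (Finset.mem_filter.1 hf).2
  set G : Finset (Finset X) := restrictX F1 x with hGdef
  have hGample : IsAmple G := ample_restrictX hF1ample x
  have hGne : ∀ g ∈ G, g ≠ ∅ := by
    rintro g hg rfl
    obtain ⟨f, hf, hfe⟩ := Finset.mem_image.1 hg
    have hxf : x ∈ f := hF1x f hf
    have : f = {x} := by
      ext a
      by_cases hax : a = x
      · subst hax; simp [hxf]
      · simp only [Finset.mem_singleton, hax, iff_false]
        intro ha
        have : a ∈ f.erase x := Finset.mem_erase.2 ⟨hax, ha⟩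
        rw [hfe] at this
        simp at this
    exact hnx (this ▸ hF1sub hf)
  have hGnonempty : G.Nonempty := by
    obtain ⟨d, hd, hdne⟩ := hne
    exact ⟨d.erase x, Finset.mem_image.2 ⟨d, Finset.mem_filter.2 ⟨hd, hall d hd hdne⟩, rfl⟩⟩
  obtain ⟨Y, hQ1, hQ2⟩ := exists_good_transversal hGample hGnonempty hGne
  have hYne : Y ≠ ∅ := by
    rintro rfl
    obtain ⟨g, hg⟩ := hGnonempty
    exact hQ2 g hg (Finset.inter_empty g)
  have hxY : x ∉ Y := by
    intro hx
    obtain ⟨g, hg, hgY⟩ := hQ1 Y Finset.Subset.rfl hYne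
    have hxg : x ∈ g := by
      have h2 : x ∈ g ∩ Y := by rw [hgY]; exact hx
      exact (Finset.mem_inter.1 h2).1
    obtain ⟨f, hf, rfl⟩ := Finset.mem_image.1 hg
    simp at hxg
  -- C shatters Y
  have hCY : Shatters C Y := by
    intro s hs
    rw [Finset.mem_powerset] at hs
    by_cases h0 : s = ∅
    · exact ⟨∅, hempty, by simp [h0]⟩
    · obtain ⟨g, hg, hgY⟩ := hQ1 s hs h0
      obtain ⟨f, hf, rfl⟩ := Finset.mem_image.1 hg
      exact ⟨f, hF1sub hf, by rw [← erase_inter_of_not_mem hxY, hgY]⟩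
  -- F1 does not shatter Y
  have hF1Y : ¬ Shatters F1 Y := by
    intro h
    obtain ⟨f, hf, hfY⟩ := h ∅ (by simp)
    have : (f.erase x) ∩ Y = ∅ := by rw [erase_inter_of_not_mem hxY, hfY]
    exact hQ2 (f.erase x) (Finset.mem_image.2 ⟨f, hf, rfl⟩) this
  -- C shatters {x}
  have hCx : Shatters C {x} := by
    intro s hs
    rw [Finset.mem_powerset, Finset.subset_singleton_iff] at hs
    rcases hs with rfl | rfl
    · exact ⟨∅, hempty, by simp⟩
    · obtain ⟨d, hd, hdne⟩ := hne
      exact ⟨d, hd, by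
        rw [Finset.inter_singleton_of_mem (hall d hd hdne)]⟩
  -- F1 does not shatter {x}
  have hF1x' : ¬ Shatters F1 {x} := by
    intro h
    obtain ⟨f, hf, hfx⟩ := h ∅ (by simp)
    rw [Finset.inter_singleton_of_mem (hF1x f hf)] at hfx
    simp at hfx
  -- counting
  have hYnex : Y ≠ ({x} : Finset X) := by
    intro h
    exact hxY (h ▸ Finset.mem_singleton_self x)
  have hsubset : insert Y (insert {x} (shatteredSets F1)) ⊆ shatteredSets C := by
    intro Z hZ
    rcases Finset.mem_insert.1 hZ with rfl | hZ
    · exact mem_shatteredSets.2 hCY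
    · rcases Finset.mem_insert.1 hZ with rfl | hZ
      · exact mem_shatteredSets.2 hCx
      · exact shatteredSets_mono hF1sub hZ
  have hYnotin : Y ∉ insert ({x} : Finset X) (shatteredSets F1) := by
    intro h
    rcases Finset.mem_insert.1 h with h | h
    · exact hYnex h
    · exact hF1Y (mem_shatteredSets.1 h)
  have hxnotin : ({x} : Finset X) ∉ shatteredSets F1 := fun h => hF1x' (mem_shatteredSets.1 h)
  have hcard : (shatteredSets F1).card + 2 ≤ (shatteredSets C).card := by
    have h1 := Finset.card_le_card hsubset
    rw [Finset.card_insert_of_notMem hYnotin, Finset.card_insert_of_notMem hxnotin] at h1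
    omega
  have hCcard : C.card = (shatteredSets C).card := hC
  have hF1c : F1.card = (shatteredSets F1).card := hF1ample
  have : C.card ≠ 0 := fun h => by simp [Finset.card_eq_zero.1 h] at hempty
  omega

lemma symmDiff_inter_dist (d t Y : Finset X) :
    (symmDiff d t) ∩ Y = symmDiff (d ∩ Y) (t ∩ Y) := by
  ext a
  simp only [Finset.mem_inter, Finset.mem_symmDiff]
  tauto

lemma shatters_twist {C : Finset (Finset X)} {t Y : Finset X} :
    Shatters (C.image (fun d => symmDiff d t)) Y ↔ Shatters C Y := by
  constructor
  · intro h s hs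
    rw [Finset.mem_powerset] at hs
    have hsY : symmDiff s (t ∩ Y) ⊆ Y := by
      intro a ha
      rcases Finset.mem_symmDiff.1 ha with ⟨h1, _⟩ | ⟨h1, _⟩
      · exact hs h1
      · exact (Finset.mem_inter.1 h1).2
    obtain ⟨d', hd', hd'Y⟩ := h _ (Finset.mem_powerset.2 hsY)
    obtain ⟨d, hd, rfl⟩ := Finset.mem_image.1 hd'
    refine ⟨d, hd, ?_⟩
    have h1 : symmDiff (d ∩ Y) (t ∩ Y) = symmDiff s (t ∩ Y) := by
      rw [← symmDiff_inter_dist, hd'Y]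
    have := congrArg (fun u => symmDiff u (t ∩ Y)) h1
    simpa [symmDiff_symmDiff_cancel_right] using this
  · intro h s hs
    rw [Finset.mem_powerset] at hs
    have hsY : symmDiff s (t ∩ Y) ⊆ Y := by
      intro a ha
      rcases Finset.mem_symmDiff.1 ha with ⟨h1, _⟩ | ⟨h1, _⟩
      · exact hs h1
      · exact (Finset.mem_inter.1 h1).2
    obtain ⟨d, hd, hdY⟩ := h _ (Finset.mem_powerset.2 hsY)
    refine ⟨symmDiff d t, Finset.mem_image.2 ⟨d, hd, rfl⟩, ?_⟩
    rw [symmDiff_inter_dist, hdY, symmDiff_symmDiff_cancel_right]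

lemma ample_twist {C : Finset (Finset X)} (hC : IsAmple C) (t : Finset X) :
    IsAmple (C.image (fun d => symmDiff d t)) := by
  have hinj : Set.InjOn (fun d => symmDiff d t) (C : Set (Finset X)) := by
    intro a _ b _ h
    have := congrArg (fun u => symmDiff u t) h
    simpa [symmDiff_symmDiff_cancel_right] using this
  have hcard : (C.image (fun d => symmDiff d t)).card = C.card :=
    Finset.card_image_of_injOn hinj
  have hsh : shatteredSets (C.image (fun d => symmDiff d t)) = shatteredSets C := by
    ext Y
    rw [mem_shatteredSets, mem_shatteredSets, shatters_twist]
  unfold IsAmple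
  rw [hcard, hsh]
  exact hC

lemma crux {C : Finset (Finset X)} (hC : IsAmple C) {c : Finset X} (hc : c ∈ C) (x : X)
    (hall : ∀ d ∈ C, d ≠ c → ¬((x ∈ d) ↔ (x ∈ c))) (hne : ∃ d ∈ C, d ≠ c) :
    symmDiff c {x} ∈ C := by
  classical
  set C' := C.image (fun d => symmDiff d c) with hC'def
  have hC'ample : IsAmple C' := ample_twist hC c
  have hempty : (∅ : Finset X) ∈ C' := by
    refine Finset.mem_image.2 ⟨c, hc, ?_⟩
    rw [symmDiff_self, Finset.bot_eq_empty]
  have hall' : ∀ d' ∈ C', d' ≠ ∅ → x ∈ d' := by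
    intro d' hd' hd'ne
    obtain ⟨d, hd, rfl⟩ := Finset.mem_image.1 hd'
    have hdc : d ≠ c := by
      rintro rfl
      rw [symmDiff_self, Finset.bot_eq_empty] at hd'ne
      exact hd'ne rfl
    have := hall d hd hdc
    rw [Finset.mem_symmDiff]
    tauto
  have hne' : ∃ d' ∈ C', d' ≠ ∅ := by
    obtain ⟨d, hd, hdc⟩ := hne
    refine ⟨symmDiff d c, Finset.mem_image.2 ⟨d, hd, rfl⟩, ?_⟩
    intro h
    apply hdc
    apply symmDiff_eq_bot.1
    rw [h, Finset.bot_eq_empty]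
  have hx : ({x} : Finset X) ∈ C' := crux_normalized hC'ample x hempty hall' hne'
  obtain ⟨d, hd, hdx⟩ := Finset.mem_image.1 hx
  have : d = symmDiff ({x} : Finset X) c := by
    have := congrArg (fun u => symmDiff u c) hdx
    simpa [symmDiff_symmDiff_cancel_right] using this
  rw [this] at hd
  rwa [symmDiff_comm] at hd


lemma lemK {C : Finset (Finset X)} (hC : IsAmple C) {c c' : Finset X}
    (hc : c ∈ C) (hc' : c' ∈ C) (hne : c ≠ c') :
    ∃ z ∈ symmDiff c c', symmDiff c {z} ∈ C := by
  classical
  suffices h : ∀ n (C : Finset (Finset X)), C.card ≤ n → IsAmple C →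
      ∀ c c' : Finset X, c ∈ C → c' ∈ C → c ≠ c' →
      ∃ z ∈ symmDiff c c', symmDiff c {z} ∈ C from
    h C.card C le_rfl hC c c' hc hc' hne
  intro n
  induction n with
  | zero =>
    intro C hcard hC c c' hc hc' hne
    have := Finset.card_pos.2 ⟨c, hc⟩
    omega
  | succ n ih =>
    intro C hcard hC c c' hc hc' hne
    set Y := symmDiff c c' with hYdef
    have hYne : Y ≠ ∅ := by
      intro h
      exact hne (symmDiff_eq_bot.1 (by rw [← Finset.bot_eq_empty] at h; exact h))
    set D := C.filter (fun d => d \ Y = c \ Y) with hDdef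
    have hDample : IsAmple D := ample_filter_cube hC c Y
    have hcD : c ∈ D := Finset.mem_filter.2 ⟨hc, rfl⟩
    have hc'D : c' ∈ D := by
      refine Finset.mem_filter.2 ⟨hc', ?_⟩
      ext a
      simp only [Finset.mem_sdiff, hYdef, Finset.mem_symmDiff]
      tauto
    by_cases hDC : D = C
    · -- every element of C agrees with c outside Y
      have hagree : ∀ d ∈ C, d \ Y = c \ Y := by
        intro d hd
        rw [← hDC] at hd
        exact (Finset.mem_filter.1 hd).2
      obtain ⟨x, hx⟩ := Finset.nonempty_iff_ne_empty.2 hYne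
      set Cc := C.filter (fun d => (x ∈ d) ↔ (x ∈ c)) with hCcdef
      have hCcample : IsAmple Cc := by
        obtain ⟨h0, h1, -, -⟩ := ample_split hC x
        by_cases hxc : x ∈ c
        · have : Cc = half1 C x := by
            apply Finset.filter_congr
            intro d _
            simp [hxc, half1]
          rw [this]; exact h1
        · have : Cc = half0 C x := by
            apply Finset.filter_congr
            intro d _
            simp [hxc, half0]
          rw [this]; exact h0
      have hcCc : c ∈ Cc := Finset.mem_filter.2 ⟨hc, Iff.rfl⟩
      have hc'Cc : c' ∉ Cc := by
        intro h
        have h2 := (Finset.mem_filter.1 h).2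
        rcases Finset.mem_symmDiff.1 hx with ⟨h3, h4⟩ | ⟨h3, h4⟩ <;> tauto
      have hCclt : Cc.card < C.card :=
        Finset.card_lt_card (Finset.ssubset_iff_of_subset (Finset.filter_subset _ _) |>.2
          ⟨c', hc', hc'Cc⟩)
      by_cases hCc1 : ∀ d ∈ Cc, d = c
      · -- corner case : use crux
        have hall : ∀ d ∈ C, d ≠ c → ¬((x ∈ d) ↔ (x ∈ c)) := by
          intro d hd hdc hiff
          exact hdc (hCc1 d (Finset.mem_filter.2 ⟨hd, hiff⟩))
        have hcx : symmDiff c {x} ∈ C := crux hC hc x hall ⟨c', hc', fun h => hne h.symm⟩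
        exact ⟨x, hx, hcx⟩
      · push_neg at hCc1
        obtain ⟨d, hd, hdc⟩ := hCc1
        obtain ⟨z, hz, hcz⟩ := ih Cc (by omega) hCcample c d hcCc hd (fun h => hdc h.symm)
        refine ⟨z, ?_, (Finset.filter_subset _ _) hcz⟩
        -- z ∈ symmDiff c d ⊆ Y
        by_contra hzY
        have hdC : d ∈ C := (Finset.filter_subset _ _) hd
        have h1 := hagree d hdC
        have h2 := congrArg (fun s => z ∈ s) h1
        simp only [Finset.mem_sdiff, eq_iff_iff] at h2
        rcases Finset.mem_symmDiff.1 hz with ⟨h3, h4⟩ | ⟨h3, h4⟩ <;> tauto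
    · -- D proper subset : apply IH to D
      have hDlt : D.card < C.card := by
        refine Finset.card_lt_card (Finset.ssubset_iff_of_subset (Finset.filter_subset _ _) |>.2 ?_)
        by_contra h
        push_neg at h
        exact hDC (Finset.Subset.antisymm (Finset.filter_subset _ _) h)
      obtain ⟨z, hz, hcz⟩ := ih D (by omega) hDample c c' hcD hc'D hne
      exact ⟨z, hz, (Finset.filter_subset _ _) hcz⟩


lemma mem_cubeAt_self (c Y : Finset X) : c ∈ cubeAt c Y :=
  Finset.mem_image.2 ⟨c ∩ Y, Finset.mem_powerset.2 Finset.inter_subset_right,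
    Finset.sdiff_union_inter c Y⟩

lemma isCubeS_cubeAt (c Y : Finset X) : IsCubeS (cubeAt c Y) Y := by
  refine ⟨c \ Y, ?_, rfl⟩
  ext a
  simp only [Finset.mem_inter, Finset.mem_sdiff, Finset.notMem_empty]
  tauto

lemma shatters_of_cubeS_subset {B C : Finset (Finset X)} {Y : Finset X}
    (hB : IsCubeS B Y) (hsub : B ⊆ C) : Shatters C Y := by
  obtain ⟨t, htY, rfl⟩ := hB
  intro s hs
  rw [Finset.mem_powerset] at hs
  refine ⟨t ∪ s, hsub (Finset.mem_image.2 ⟨s, Finset.mem_powerset.2 hs, rfl⟩), ?_⟩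
  rw [Finset.union_inter_distrib_right, htY, Finset.empty_union,
    Finset.inter_eq_left.2 hs]

lemma support_mono {B1 B2 : Finset (Finset X)} {Y1 Y2 : Finset X}
    (h1 : IsCubeS B1 Y1) (h2 : IsCubeS B2 Y2) (hsub : B1 ⊆ B2) : Y1 ⊆ Y2 := by
  obtain ⟨t1, ht1, rfl⟩ := h1
  obtain ⟨t2, ht2, rfl⟩ := h2
  intro z hz
  by_contra hzY2
  have he1 : t1 ∈ Finset.image (fun s => t2 ∪ s) Y2.powerset := by
    apply hsub
    exact Finset.mem_image.2 ⟨∅, by simp, by simp⟩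
  have he2 : t1 ∪ {z} ∈ Finset.image (fun s => t2 ∪ s) Y2.powerset := by
    apply hsub
    exact Finset.mem_image.2 ⟨{z}, by simp [Finset.singleton_subset_iff, hz], rfl⟩
  obtain ⟨s1, hs1, hs1e⟩ := Finset.mem_image.1 he1
  obtain ⟨s2, hs2, hs2e⟩ := Finset.mem_image.1 he2
  rw [Finset.mem_powerset] at hs1 hs2
  have hzt1 : z ∉ t1 := by
    intro h
    have : z ∈ t1 ∩ Y1 := Finset.mem_inter.2 ⟨h, hz⟩
    rw [ht1] at this
    simp at this
  have hz2 : z ∈ t2 ∪ s2 := by rw [hs2e]; simp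
  have hzs2 : z ∉ s2 := fun h => hzY2 (hs2 h)
  have hzt2 : z ∈ t2 := by
    rcases Finset.mem_union.1 hz2 with h | h
    · exact h
    · exact absurd h hzs2
  have : z ∈ t1 := by
    have : z ∈ t2 ∪ s1 := Finset.mem_union.2 (Or.inl hzt2)
    rw [hs1e] at this
    exact this
  exact hzt1 this

lemma exists_maximal_cube' {C B0 : Finset (Finset X)} (hsub : B0 ⊆ C)
    (hcube : ∃ Y, IsCubeS B0 Y) :
    ∃ B, (B ⊆ C ∧ (∃ Y, IsCubeS B Y)) ∧
      (∀ B', (B' ⊆ C ∧ (∃ Y, IsCubeS B' Y)) → B ⊆ B' → B = B') ∧ B0 ⊆ B := by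
  classical
  set T := C.powerset.filter (fun B => B0 ⊆ B ∧ ∃ Y, IsCubeS B Y) with hT
  have hTne : T.Nonempty :=
    ⟨B0, Finset.mem_filter.2 ⟨Finset.mem_powerset.2 hsub, Finset.Subset.rfl, hcube⟩⟩
  obtain ⟨B, hBT, hBmax⟩ := T.exists_max_image Finset.card hTne
  have hm := Finset.mem_filter.1 hBT
  have hBC := Finset.mem_powerset.1 hm.1
  have hB0B := hm.2.1
  have hBcube := hm.2.2
  refine ⟨B, ⟨hBC, hBcube⟩, ?_, hB0B⟩
  rintro B' ⟨hB'C, hB'cube⟩ hBB'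
  have hB'T : B' ∈ T := Finset.mem_filter.2 ⟨Finset.mem_powerset.2 hB'C,
    hB0B.trans hBB', hB'cube⟩
  exact Finset.eq_of_subset_of_card_le hBB' (hBmax B' hB'T)

lemma symmDiff_singleton_of_mem {c : Finset X} {z : X} (h : z ∈ c) :
    symmDiff c {z} = c.erase z := by
  ext a
  simp only [Finset.mem_symmDiff, Finset.mem_singleton, Finset.mem_erase]
  constructor
  · rintro (⟨h1, h2⟩ | ⟨rfl, h2⟩)
    · exact ⟨h2, h1⟩
    · exact absurd h h2
  · rintro ⟨h1, h2⟩
    exact Or.inl ⟨h2, h1⟩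

lemma symmDiff_singleton_of_not_mem {c : Finset X} {z : X} (h : z ∉ c) :
    symmDiff c {z} = insert z c := by
  ext a
  simp only [Finset.mem_symmDiff, Finset.mem_singleton, Finset.mem_insert]
  constructor
  · rintro (⟨h1, h2⟩ | ⟨rfl, h2⟩)
    · exact Or.inr h1
    · exact Or.inl rfl
  · rintro (rfl | h1)
    · exact Or.inr ⟨rfl, h⟩
    · exact Or.inl ⟨h1, fun hh => h (hh ▸ h1)⟩

lemma edge_cube_subset {C : Finset (Finset X)} {c : Finset X} {z : X}
    (hc : c ∈ C) (hz : symmDiff c {z} ∈ C) : cubeAt c {z} ⊆ C := by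
  intro d hd
  obtain ⟨s, hs, rfl⟩ := Finset.mem_image.1 hd
  rw [Finset.mem_powerset, Finset.subset_singleton_iff] at hs
  have hsd : c \ {z} = c.erase z := by
    ext a; simp only [Finset.mem_sdiff, Finset.mem_singleton, Finset.mem_erase]; tauto
  rcases hs with rfl | rfl
  · rw [Finset.union_empty, hsd]
    by_cases hzc : z ∈ c
    · rwa [← symmDiff_singleton_of_mem hzc]
    · rwa [Finset.erase_eq_of_notMem hzc]
  · have : c \ {z} ∪ {z} = insert z c := by
      ext a
      simp only [Finset.mem_union, Finset.mem_sdiff, Finset.mem_singleton, Finset.mem_insert]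
      tauto
    rw [this]
    by_cases hzc : z ∈ c
    · rwa [Finset.insert_eq_self.2 hzc]
    · rwa [← symmDiff_singleton_of_not_mem hzc]


theorem stmt4_aux (C : Finset (Finset X)) (hC : IsAmple C) (c : Finset X)
    (hc : c ∈ C ∧ ∃! B, ((B ⊆ C ∧ ∃ Y, IsCubeS B Y) ∧
      (∀ B', (B' ⊆ C ∧ ∃ Y, IsCubeS B' Y) → B ⊆ B' → B = B')) ∧ c ∈ B) :
    IsAmple (C.erase c) := by
  classical
  obtain ⟨hcC, hEU⟩ := hc
  obtain ⟨B, hB, huniq⟩ := hEU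
  obtain ⟨⟨⟨hBsub, YB, hYB⟩, hBmax⟩, hcB⟩ := hB
  have h1 : Shatters C YB := shatters_of_cubeS_subset hYB hBsub
  have h2 : ¬ Shatters (C.erase c) YB := by
    intro hsh
    obtain ⟨c'', hc''mem, hc''Y⟩ := hsh (c ∩ YB)
      (Finset.mem_powerset.2 Finset.inter_subset_right)
    have hc''ne : c'' ≠ c := Finset.ne_of_mem_erase hc''mem
    have hc''C : c'' ∈ C := Finset.mem_of_mem_erase hc''mem
    obtain ⟨z, hz, hcz⟩ := lemK hC hcC hc''C (fun h => hc''ne h.symm)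
    have hzYB : z ∉ YB := by
      intro hzY
      have e := congrArg (fun s => z ∈ s) hc''Y
      simp only [Finset.mem_inter, eq_iff_iff] at e
      rcases Finset.mem_symmDiff.1 hz with ⟨h3, h4⟩ | ⟨h3, h4⟩ <;> tauto
    have hedge := edge_cube_subset hcC hcz
    obtain ⟨B', hB'cubeof, hB'max, hB'sup⟩ :=
      exists_maximal_cube' hedge ⟨{z}, isCubeS_cubeAt c {z}⟩
    have hcB' : c ∈ B' := hB'sup (mem_cubeAt_self c {z})
    have hBeq : B' = B := huniq B' ⟨⟨hB'cubeof, hB'max⟩, hcB'⟩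
    have hYB' : IsCubeS B' YB := by rw [hBeq]; exact hYB
    have hzin : ({z} : Finset X) ⊆ YB :=
      support_mono (isCubeS_cubeAt c {z}) hYB' hB'sup
    exact hzYB (hzin (Finset.mem_singleton_self z))
  have hss : shatteredSets (C.erase c) ⊆ shatteredSets C :=
    shatteredSets_mono (Finset.erase_subset c C)
  have hproper : shatteredSets (C.erase c) ⊂ shatteredSets C :=
    (Finset.ssubset_iff_of_subset hss).2
      ⟨YB, mem_shatteredSets.2 h1, fun hmem => h2 (mem_shatteredSets.1 hmem)⟩
  have hlt := Finset.card_lt_card hproper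
  have hp := pajor (C.erase c)
  have hcarde := Finset.card_erase_of_mem hcC
  have hCa : C.card = (shatteredSets C).card := hC
  have hCpos : 0 < C.card := Finset.card_pos.2 ⟨c, hcC⟩
  unfold IsAmple
  omega
end Split

/-- If `C` is ample and `c` is a corner of `C`, then `C \ {c}` is ample. -/
theorem stmt_4 (C : Finset (Finset X)) (hC : IsAmple C) (c : Finset X)
    (hc : IsCornerOf C c) : IsAmple (C.erase c) :=
  stmt4_aux C hC c hc
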